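/- There is a function ε(n) → 0 such that for all sufficiently large n, the Dushnik–Miller dimension of the divisibility poset on {1,…,n} is at least (1/16 − ε(n))·(log n)²/(log log n)². Equivalently: for every ε > 0 there exists N such that for all n ≥ N, dim(D_{[n]}) ≥ (1/16 − ε)·(log n)²/(log log n)². -/

import Mathlib

set_option maxHeartbeats 1000000

open Finset Real

/-- The Dushnik-Miller dimension of the divisibility poset on a set `S ⊆ ℕ`:
the least `d` such that there is an order embedding of `(S, ∣)` into `ℝ^d`
with the componentwise order. -/
noncomputable def divDim (S : Set ℕ) : ℕ :=
  sInf {d : ℕ | ∃ f : ℕ → (Fin d → ℝ), ∀ a ∈ S, ∀ b ∈ S, (f a ≤ f b ↔ a ∣ b)}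


/-- Chebyshev-type bound: `(z-1) log 2 ≤ (π(z)+1) log z`. -/
lemma cheb (z : ℕ) (hz : 9 ≤ z) :
    ((z : ℝ) - 1) * Real.log 2 ≤
      (((Finset.range (z+1)).filter Nat.Prime).card + 1 : ℝ) * Real.log z := by
  set M := z / 2 with hM
  have hM4 : 4 ≤ M := by omega
  have h2M : 2 * M ≤ z := by omega
  have hMz : (z:ℕ) - 1 ≤ 2 * M := by omega
  -- 4^M < M * centralBinom M
  have h1 : 4 ^ M < M * Nat.centralBinom M := Nat.four_pow_lt_mul_centralBinom M hM4
  -- centralBinom M ≤ (2M)^(number of primes ≤ 2M)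
  have hC0 : Nat.centralBinom M ≠ 0 := (Nat.centralBinom_pos M).ne'
  have h2 : Nat.centralBinom M ≤
      (2*M) ^ ((Nat.centralBinom M).primeFactors.card) := by
    conv_lhs => rw [← Nat.factorization_prod_pow_eq_self hC0]
    rw [Nat.prod_factorization_eq_prod_primeFactors]
    calc ∏ p ∈ (Nat.centralBinom M).primeFactors, p ^ ((Nat.centralBinom M).factorization p)
        ≤ ∏ _p ∈ (Nat.centralBinom M).primeFactors, (2*M) := by
          apply Finset.prod_le_prod
          · intros; positivity
          · intro p _
            exact Nat.pow_factorization_choose_le (by omega)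
      _ = (2*M) ^ ((Nat.centralBinom M).primeFactors.card) := by
          rw [Finset.prod_const]
  have hsub : (Nat.centralBinom M).primeFactors ⊆ (Finset.range (z+1)).filter Nat.Prime := by
    intro p hp
    have hpp : p.Prime := Nat.prime_of_mem_primeFactors hp
    have hdvd : p ∣ Nat.centralBinom M := Nat.dvd_of_mem_primeFactors hp
    have hple : p ≤ 2 * M := by
      have h3 : p ^ ((Nat.centralBinom M).factorization p) ≤ 2 * M :=
        Nat.pow_factorization_choose_le (by omega)
      have h4 : 1 ≤ (Nat.centralBinom M).factorization p := by
        rw [← Nat.Prime.pow_dvd_iff_le_factorization hpp hC0, pow_one]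
        exact hdvd
      calc p = p ^ 1 := (pow_one p).symm
        _ ≤ p ^ ((Nat.centralBinom M).factorization p) :=
            Nat.pow_le_pow_right hpp.pos h4
        _ ≤ 2 * M := h3
    simp only [Finset.mem_filter, Finset.mem_range]
    exact ⟨by omega, hpp⟩
  set K := ((Finset.range (z+1)).filter Nat.Prime).card with hK
  have h5 : 4 ^ M ≤ z ^ (K + 1) := by
    have hcard : (Nat.centralBinom M).primeFactors.card ≤ K := Finset.card_le_card hsub
    calc 4 ^ M ≤ M * Nat.centralBinom M := h1.le
      _ ≤ z * (2*M) ^ ((Nat.centralBinom M).primeFactors.card) :=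
          Nat.mul_le_mul (by omega) h2
      _ ≤ z * z ^ ((Nat.centralBinom M).primeFactors.card) :=
          Nat.mul_le_mul_left z (Nat.pow_le_pow_left h2M _)
      _ ≤ z * z ^ K := Nat.mul_le_mul_left z (Nat.pow_le_pow_right (by omega) hcard)
      _ = z ^ (K + 1) := by ring
  -- take logs
  have hlog : (M : ℝ) * Real.log 4 ≤ (K + 1 : ℝ) * Real.log z := by
    have := Real.log_le_log (by positivity) (by exact_mod_cast h5 : ((4:ℝ)) ^ M ≤ (z:ℝ) ^ (K+1))
    rw [Real.log_pow, Real.log_pow] at this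
    push_cast at this ⊢
    linarith
  have hlog4 : Real.log 4 = 2 * Real.log 2 := by
    rw [show (4:ℝ) = 2 ^ 2 by norm_num, Real.log_pow]
    push_cast; ring
  have hM' : ((z:ℝ) - 1) / 2 ≤ (M : ℝ) := by
    have : (z - 1 : ℕ) ≤ 2 * M := hMz
    have : ((z:ℝ) - 1) ≤ 2 * M := by
      have hz1 : (1:ℝ) ≤ (z:ℝ) := by exact_mod_cast (by omega : 1 ≤ z)
      calc ((z:ℝ) - 1) = ((z - 1 : ℕ) : ℝ) := by
            push_cast [Nat.cast_sub (by omega : 1 ≤ z)]; ring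
        _ ≤ ((2*M : ℕ) : ℝ) := by exact_mod_cast hMz
        _ = 2 * M := by push_cast; ring
    linarith
  have hlog2pos : (0:ℝ) < Real.log 2 := Real.log_pos (by norm_num)
  calc ((z:ℝ) - 1) * Real.log 2 = (((z:ℝ)-1)/2) * Real.log 4 := by rw [hlog4]; ring
    _ ≤ (M:ℝ) * Real.log 4 := by
        apply mul_le_mul_of_nonneg_right hM'
        rw [hlog4]; positivity
    _ ≤ (K + 1 : ℝ) * Real.log z := hlog


/-- Dushnik's lower bound argument: if `P` has `j*j` elements and the family of
functions `g c` is "suitable" for sets of size `2j-2` (for every `x ∈ P` and every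
`(2j-2)`-subset `B` of `P \ {x}` some `g c` puts `x` strictly above all of `B`),
then there are at least `j*j - j + 1` functions. -/
lemma dushnik {d j : ℕ} (hj : 2 ≤ j) (P : Finset ℕ) (hP : P.card = j * j)
    (g : Fin d → ℕ → ℝ)
    (hsuit : ∀ x ∈ P, ∀ B ⊆ P.erase x, B.card = 2 * j - 2 →
      ∃ c : Fin d, ∀ y ∈ B, g c y < g c x) :
    j * j + 1 ≤ d + j := by
  classical
  by_contra hcon
  push_neg at hcon
  have hd : d + j ≤ j * j := by omega
  have hPne : P.Nonempty := by
    rw [← Finset.card_pos, hP]; positivity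
  -- for each coordinate, a maximizer over P
  have hmax : ∀ c : Fin d, ∃ b ∈ P, ∀ y ∈ P, g c y ≤ g c b :=
    fun c => P.exists_max_image (g c) hPne
  choose t htP htmax using hmax
  set T : Finset ℕ := Finset.image t Finset.univ with hT
  have hTcard : T.card ≤ d := le_trans (Finset.card_image_le) (by simp)
  -- pick J ⊆ P \ T with |J| = j
  have hsd : j ≤ (P \ T).card := by
    have h1 : P.card - T.card ≤ (P \ T).card := Finset.le_card_sdiff T P
    omega
  obtain ⟨J, hJsub, hJcard⟩ := Finset.exists_subset_card_eq (s := P \ T) (n := j) hsd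
  have hJP : J ⊆ P := hJsub.trans (Finset.sdiff_subset)
  -- the sets of coordinates where x strictly dominates J \ {x}
  set C : ℕ → Finset (Fin d) :=
    fun x => Finset.univ.filter (fun c => ∀ y ∈ J.erase x, g c y < g c x) with hC
  have hdisj : ∀ x ∈ J, ∀ x' ∈ J, x ≠ x' → Disjoint (C x) (C x') := by
    intro x hx x' hx' hne
    rw [Finset.disjoint_left]
    intro c hc hc'
    simp only [hC, Finset.mem_filter, Finset.mem_univ, true_and] at hc hc'
    have h1 : g c x' < g c x := hc x' (Finset.mem_erase.mpr ⟨hne.symm, hx'⟩)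
    have h2 : g c x < g c x' := hc' x (Finset.mem_erase.mpr ⟨hne, hx⟩)
    linarith
  have hsum : ∑ x ∈ J, (C x).card ≤ d := by
    rw [← Finset.card_biUnion hdisj]
    calc (J.biUnion C).card ≤ (Finset.univ : Finset (Fin d)).card :=
          Finset.card_le_card (Finset.subset_univ _)
      _ = d := by simp
  -- some x* has few dominating coordinates
  have hxstar : ∃ x ∈ J, (C x).card + 1 ≤ j := by
    by_contra hno
    push_neg at hno
    have : ∀ x ∈ J, j ≤ (C x).card := by
      intro x hx; have := hno x hx; omega
    have hge : j * j ≤ ∑ x ∈ J, (C x).card := by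
      calc j * j = ∑ _x ∈ J, j := by rw [Finset.sum_const, hJcard]; ring
        _ ≤ ∑ x ∈ J, (C x).card := Finset.sum_le_sum this
    omega
  obtain ⟨x, hxJ, hxC⟩ := hxstar
  have hxP : x ∈ P := hJP hxJ
  have hxT : x ∉ T := (Finset.mem_sdiff.mp (hJsub hxJ)).2
  -- build the bad set B
  set B0 : Finset ℕ := (J.erase x) ∪ (C x).image t with hB0
  have hB0card : B0.card ≤ 2 * j - 2 := by
    have h1 : (J.erase x).card = j - 1 := by rw [Finset.card_erase_of_mem hxJ, hJcard]
    have h2 : ((C x).image t).card ≤ j - 1 := le_trans Finset.card_image_le (by omega)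
    calc B0.card ≤ (J.erase x).card + ((C x).image t).card := Finset.card_union_le _ _
      _ ≤ (j-1) + (j-1) := by omega
      _ = 2 * j - 2 := by omega
  have hB0sub : B0 ⊆ P.erase x := by
    intro y hy
    rw [hB0, Finset.mem_union] at hy
    rcases hy with hy | hy
    · have := Finset.mem_erase.mp hy
      exact Finset.mem_erase.mpr ⟨this.1, hJP this.2⟩
    · obtain ⟨c, _, rfl⟩ := Finset.mem_image.mp hy
      refine Finset.mem_erase.mpr ⟨?_, htP c⟩
      intro hteq
      exact hxT (by rw [hT, ← hteq]; exact Finset.mem_image_of_mem t (Finset.mem_univ c))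
  have hPcard : 2 * j - 2 ≤ (P.erase x).card := by
    rw [Finset.card_erase_of_mem hxP, hP]
    have : 2 * j ≤ j * j := by nlinarith
    omega
  obtain ⟨B, hB0B, hBsub, hBcard⟩ :=
    Finset.exists_subsuperset_card_eq hB0sub hB0card hPcard
  have hBcard' : B.card = 2 * j - 2 := by omega
  -- apply suitability
  obtain ⟨c, hc⟩ := hsuit x hxP B hBsub hBcard'
  by_cases hcC : c ∈ C x
  · have htB : t c ∈ B := hB0B (Finset.mem_union_right _ (Finset.mem_image_of_mem t hcC))
    have h1 : g c (t c) < g c x := hc (t c) htB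
    have h2 : g c x ≤ g c (t c) := htmax c x hxP
    linarith
  · simp only [hC, Finset.mem_filter, Finset.mem_univ, true_and, not_forall] at hcC
    obtain ⟨y, hyJ, hy⟩ := hcC
    have hyB : y ∈ B := hB0B (Finset.mem_union_left _ hyJ)
    exact hy (hc y hyB)


lemma exists_realizer (n : ℕ) :
    ∃ f : ℕ → (Fin n → ℝ), ∀ a ∈ Set.Icc 1 n, ∀ b ∈ Set.Icc 1 n, (f a ≤ f b ↔ a ∣ b) := by
  classical
  refine ⟨fun a => fun i => if ((i:ℕ)+1) ∣ a then 1 else 0, ?_⟩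
  rintro a ⟨ha1, han⟩ b ⟨hb1, hbn⟩
  constructor
  · intro h
    have hi : a - 1 < n := by omega
    have h1 := h ⟨a - 1, hi⟩
    simp only [] at h1
    simp only [Nat.sub_add_cancel ha1] at h1
    rw [if_pos (dvd_refl a)] at h1
    by_contra hab
    rw [if_neg hab] at h1
    linarith
  · intro hab i
    simp only []
    show (if ((i:ℕ)+1) ∣ a then (1:ℝ) else 0) ≤ (if ((i:ℕ)+1) ∣ b then (1:ℝ) else 0)
    by_cases h1 : ((i:ℕ)+1) ∣ a
    · rw [if_pos h1, if_pos (h1.trans hab)]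
    · rw [if_neg h1]
      by_cases h2 : ((i:ℕ)+1) ∣ b
      · rw [if_pos h2]; norm_num
      · rw [if_neg h2]

lemma core (ε : ℝ) (hε : 0 < ε) (hε32 : ε ≤ 1/32) :
    ∃ N : ℕ, ∀ n : ℕ, N ≤ n →
      ((1 / 16 - ε) * (Real.log n) ^ 2 / (Real.log (Real.log n)) ^ 2
        ≤ (divDim (Set.Icc 1 n) : ℝ)) ∧ 1 ≤ Real.log (Real.log n) := by
  classical
  set K : ℝ := max 1024 (32/ε) with hKdef
  refine ⟨⌈Real.exp (Real.exp K)⌉₊, fun n hn => ?_⟩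
  have hK1024 : (1024:ℝ) ≤ K := le_max_left _ _
  have hKε : 32/ε ≤ K := le_max_right _ _
  have hNn : Real.exp (Real.exp K) ≤ (n:ℝ) := by
    calc Real.exp (Real.exp K) ≤ (⌈Real.exp (Real.exp K)⌉₊ : ℝ) := Nat.le_ceil _
      _ ≤ (n:ℝ) := by exact_mod_cast hn
  set L : ℝ := Real.log n with hLdef
  set LL : ℝ := Real.log L with hLLdef
  have hL : Real.exp K ≤ L := by
    calc Real.exp K = Real.log (Real.exp (Real.exp K)) := (Real.log_exp _).symm
      _ ≤ L := Real.log_le_log (Real.exp_pos _) hNn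
  have hL1025 : (1025:ℝ) ≤ L := by
    have := Real.add_one_le_exp K
    linarith
  have hLL : K ≤ LL := by
    calc K = Real.log (Real.exp K) := (Real.log_exp _).symm
      _ ≤ LL := Real.log_le_log (Real.exp_pos _) hL
  have hLL1024 : (1024:ℝ) ≤ LL := le_trans hK1024 hLL
  have hLLε : 32/ε ≤ LL := le_trans hKε hLL
  have hεLL : 32 ≤ ε * LL := by
    rw [div_le_iff₀ hε] at hLLε
    linarith [mul_comm LL ε]
  have hLpos : (0:ℝ) < L := by linarith
  have hLLpos : (0:ℝ) < LL := by linarith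
  -- LL^2 ≤ 4 L
  have hLL2 : LL^2 ≤ 4 * L := by
    have hs : (0:ℝ) < Real.sqrt L := Real.sqrt_pos.mpr hLpos
    have h1 : LL = 2 * Real.log (Real.sqrt L) := by
      rw [Real.log_sqrt hLpos.le]; ring
    have h2 : Real.log (Real.sqrt L) ≤ Real.sqrt L :=
      le_trans (Real.log_le_sub_one_of_pos hs) (by linarith)
    have h3 : LL ≤ 2 * Real.sqrt L := by
      have h0 : (0:ℝ) ≤ Real.log (Real.sqrt L) := by
        have h1L : (1:ℝ) ≤ Real.sqrt L := by
          have := Real.sq_sqrt hLpos.le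
          nlinarith [Real.sqrt_nonneg L]
        exact Real.log_nonneg h1L
      rw [h1]; linarith
    have h4 : LL^2 ≤ (2 * Real.sqrt L)^2 := by
      apply pow_le_pow_left₀ hLLpos.le h3
    have h5 : (2 * Real.sqrt L)^2 = 4 * L := by
      rw [mul_pow, Real.sq_sqrt hLpos.le]; norm_num
    linarith
  set A : ℝ := L / LL with hAdef
  have hAL : A * LL = L := div_mul_cancel₀ L (ne_of_gt hLLpos)
  have hApos : 0 < A := div_pos hLpos hLLpos
  have hALL : LL / 4 ≤ A := by
    rw [hAdef, div_le_div_iff₀ (by norm_num) hLLpos]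
    have : LL * LL = LL^2 := by ring
    linarith
  have hA256 : (256:ℝ) ≤ A := by linarith
  have hAeps : 8/ε ≤ A := by
    have h1 : 32/ε ≤ 4 * A := by linarith
    rw [div_le_iff₀ hε] at h1 ⊢
    linarith
  clear_value A
  have hεA : 8 ≤ ε * A := by
    rw [div_le_iff₀ hε] at hAeps
    linarith [mul_comm A ε]
  clear_value K
  set β : ℝ := 1/4 - ε/2 with hβdef
  have hβpos : (15/64:ℝ) ≤ β := by rw [hβdef]; linarith
  have hβle : β ≤ 1/4 := by rw [hβdef]; linarith
  set j : ℕ := ⌈β * A⌉₊ with hjdef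
  have hβA60 : (60:ℝ) ≤ β * A := by
    have h0 : (0:ℝ) ≤ 15/64 := by norm_num
    have := mul_le_mul hβpos hA256 (by norm_num) (le_trans h0 hβpos)
    norm_num at this
    linarith
  have hβApos : (0:ℝ) < β * A := by linarith
  have hjlo : β * A ≤ (j:ℝ) := Nat.le_ceil _
  have hjhi : (j:ℝ) ≤ β * A + 1 := (Nat.ceil_lt_add_one hβApos.le).le
  have hj60 : (60:ℝ) ≤ (j:ℝ) := by linarith
  have hj2 : 2 ≤ j := by
    have h2j : ((2:ℕ):ℝ) ≤ (j:ℝ) := by push_cast; linarith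
    exact_mod_cast h2j
  have hβA4 : β * A ≤ A/4 := by
    have := mul_le_mul_of_nonneg_right hβle hApos.le
    linarith
  clear_value j β
  set z : ℕ := ⌈Real.exp ((2+2*ε) * LL)⌉₊ with hzdef
  have hexppos := Real.exp_pos ((2+2*ε) * LL)
  have hz1 : Real.exp ((2+2*ε) * LL) ≤ (z:ℝ) := Nat.le_ceil _
  have hz2 : (z:ℝ) ≤ 2 * Real.exp ((2+2*ε) * LL) := by
    have h1 : (z:ℝ) < Real.exp ((2+2*ε) * LL) + 1 := Nat.ceil_lt_add_one hexppos.le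
    have h2 : (1:ℝ) ≤ Real.exp ((2+2*ε) * LL) := by
      rw [show (1:ℝ) = Real.exp 0 by simp]
      apply Real.exp_le_exp.mpr
      have := mul_nonneg (by linarith : (0:ℝ) ≤ 2+2*ε) hLLpos.le
      linarith
    linarith
  have hzL2 : L^2 ≤ (z:ℝ) := by
    have h1 : Real.exp (2 * LL) ≤ Real.exp ((2+2*ε) * LL) := by
      apply Real.exp_le_exp.mpr
      have := mul_nonneg hε.le hLLpos.le
      linarith [mul_nonneg hε.le hLLpos.le]
    have h2 : Real.exp (2 * LL) = L^2 := by
      rw [show 2 * LL = LL + LL by ring, Real.exp_add, Real.exp_log hLpos]; ring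
    linarith
  have hLsq : (1025:ℝ)*1025 ≤ L^2 := by
    have h1 : (1025:ℝ)*1025 ≤ L*L :=
      mul_le_mul hL1025 hL1025 (by norm_num) (by linarith)
    have h2 : L*L = L^2 := by ring
    linarith
  have hz9 : 9 ≤ z := by
    have h9 : (9:ℝ) ≤ (z:ℝ) := by linarith
    exact_mod_cast h9
  have hzpos : (0:ℝ) < (z:ℝ) := by
    have h0 : (0:ℕ) < z := by omega
    exact_mod_cast h0
  have hlogz_pos : 0 < Real.log z := Real.log_pos (by exact_mod_cast (by omega : 1 < z))
  have hlogz_hi : Real.log z ≤ (2+2*ε) * LL + 1 := by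
    calc Real.log z ≤ Real.log (2 * Real.exp ((2+2*ε) * LL)) :=
          Real.log_le_log hzpos hz2
      _ = Real.log 2 + (2+2*ε) * LL := by
          rw [Real.log_mul (by norm_num) (ne_of_gt hexppos), Real.log_exp]
      _ ≤ (2+2*ε) * LL + 1 := by
          have := Real.log_two_lt_d9
          linarith
  have hlogz_3LL : Real.log z ≤ 3 * LL := by
    have h1 : ε * LL ≤ LL/32 := by
      have := mul_le_mul_of_nonneg_right hε32 hLLpos.le
      linarith
    linarith
  clear_value z
  -- prime counting
  set Kc : ℕ := ((Finset.range (z+1)).filter Nat.Prime).card with hKcdef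
  have hcheb := cheb z hz9
  have hjKc : j * j ≤ Kc := by
    have hjA : (j:ℝ) ≤ A/4 + 1 := by linarith
    have h1 : ((j:ℝ) * j + 1) ≤ A^2/8 := by
      have hj0 : (0:ℝ) ≤ (j:ℝ) := Nat.cast_nonneg j
      have hsq : (j:ℝ) * j ≤ (A/4+1) * (A/4+1) :=
        mul_le_mul hjA hjA hj0 (by linarith)
      have h16A : 16 * A ≤ A * A := by
        have := mul_le_mul_of_nonneg_right hA256 hApos.le
        linarith
      have hA2 : A^2 = A*A := by ring
      linarith
    have h2 : ((j:ℝ) * j + 1) * Real.log z ≤ (A^2/8) * (3*LL) :=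
      mul_le_mul h1 hlogz_3LL hlogz_pos.le (by positivity)
    have h3 : (A^2/8) * (3*LL) = (3/8) * (A * L) := by
      rw [← hAL]; ring
    have h4 : (3/8) * (A * L) ≤ ((z:ℝ) - 1) * Real.log 2 := by
      have hlog2 := Real.log_two_gt_d9
      have h5 : L^2 = (A * L) * LL := by rw [← hAL]; ring
      have hAL0 : (0:ℝ) ≤ A * L := mul_nonneg hApos.le hLpos.le
      have h6 : (3/8) * (A * L) ≤ L^2 / 2 := by
        have := mul_le_mul_of_nonneg_left (by linarith : (3/4:ℝ) ≤ LL) hAL0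
        linarith
      have e1 : L^2 - 1 ≤ (z:ℝ) - 1 := by linarith
      have e2 : (0:ℝ) ≤ Real.log 2 := by linarith
      have e3 : (L^2 - 1) * Real.log 2 ≤ ((z:ℝ) - 1) * Real.log 2 :=
        mul_le_mul_of_nonneg_right e1 e2
      have e4 : (L^2 - 1) * (0.6931471803:ℝ) ≤ (L^2 - 1) * Real.log 2 := by
        apply mul_le_mul_of_nonneg_left hlog2.le
        linarith
      linarith
    have h8 : ((j:ℝ) * j + 1) * Real.log z ≤ ((Kc:ℝ) + 1) * Real.log z := by
      calc ((j:ℝ) * j + 1) * Real.log z ≤ ((z:ℝ) - 1) * Real.log 2 := by linarith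
        _ ≤ ((Kc:ℝ) + 1) * Real.log z := hcheb
    have h9 : ((j:ℝ) * j) ≤ (Kc:ℝ) := by
      have := (mul_le_mul_iff_of_pos_right hlogz_pos).mp h8
      linarith
    exact_mod_cast h9
  -- choose the primes
  obtain ⟨P, hPsub, hPcard⟩ :=
    Finset.exists_subset_card_eq (s := (Finset.range (z+1)).filter Nat.Prime) (n := j*j) hjKc
  have hPfacts : ∀ p ∈ P, p.Prime ∧ p ≤ z := by
    intro p hp
    have := hPsub hp
    simp only [Finset.mem_filter, Finset.mem_range] at this
    exact ⟨this.2, by omega⟩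
  -- z^(2j-2) ≤ n
  have hcast2j : ((2*j - 2 : ℕ) : ℝ) = 2*(j:ℝ) - 2 := by
    have h22 : 2 ≤ 2*j := by omega
    push_cast [Nat.cast_sub h22]
    ring
  have hpowlog : ((2*j - 2 : ℕ) : ℝ) * Real.log z ≤ L := by
    rw [hcast2j]
    have h1 : 2*(j:ℝ) - 2 ≤ 2 * (β * A) := by linarith
    have h2 : (2*(j:ℝ) - 2) * Real.log z ≤ (2 * (β * A)) * ((2+2*ε) * LL + 1) :=
      mul_le_mul h1 hlogz_hi hlogz_pos.le (by linarith)
    have h3 : (2 * (β * A)) * ((2+2*ε) * LL + 1)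
        = L - ε*L - 2*((ε*ε)*L) + 2*(β*A) := by
      rw [hβdef, ← hAL]; ring
    have h5 : 2*(β*A) ≤ A/2 := by linarith
    have h6 : A ≤ ε * L := by
      have h7 : ε * L = (ε * LL) * A := by rw [← hAL]; ring
      have h9 : 32 * A ≤ (ε * LL) * A := mul_le_mul_of_nonneg_right hεLL hApos.le
      linarith
    have h10 : (0:ℝ) ≤ (ε*ε)*L := by positivity
    linarith
  have hzn : z ^ (2*j - 2) ≤ n := by
    have hn1 : (1:ℝ) ≤ (n:ℝ) := by
      linarith [Real.add_one_le_exp (Real.exp K), Real.exp_pos K, hNn]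
    have h1 : Real.log ((z:ℝ) ^ (2*j-2)) ≤ Real.log n := by
      rw [Real.log_pow]
      exact_mod_cast hpowlog
    have h2 : ((z:ℝ)) ^ (2*j-2) ≤ (n:ℝ) :=
      (Real.log_le_log_iff (by positivity) (by linarith)).mp h1
    exact_mod_cast h2
  have hzlen : z ≤ n := by
    calc z = z^1 := (pow_one z).symm
      _ ≤ z ^ (2*j-2) := Nat.pow_le_pow_right (by omega) (by omega)
      _ ≤ n := hzn
  clear_value L LL
  -- lower bound the dimension
  have hdim : j*j + 1 - j ≤ divDim (Set.Icc 1 n) := by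
    rw [divDim]
    apply le_csInf ⟨n, exists_realizer n⟩
    rintro d ⟨f, hf⟩
    have hsuit : ∀ x ∈ P, ∀ B ⊆ P.erase x, B.card = 2 * j - 2 →
        ∃ c : Fin d, ∀ y ∈ B, f y c < f x c := by
      intro x hxP B hBsub hBcard
      obtain ⟨hxprime, hxz⟩ := hPfacts x hxP
      have hyfacts : ∀ y ∈ B, y.Prime ∧ y ≤ z := by
        intro y hy
        exact hPfacts y (Finset.erase_subset x P (hBsub hy))
      set b : ℕ := ∏ y ∈ B, y with hbdef
      have hb1 : 1 ≤ b :=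
        Finset.one_le_prod' (fun y hy => (hyfacts y hy).1.one_lt.le)
      have hbn : b ≤ n := by
        calc b ≤ z ^ B.card :=
              Finset.prod_le_pow_card B _ z (fun y hy => (hyfacts y hy).2)
          _ = z ^ (2*j-2) := by rw [hBcard]
          _ ≤ n := hzn
      have hxmem : x ∈ Set.Icc 1 n := ⟨hxprime.one_lt.le, le_trans hxz hzlen⟩
      have hbmem : b ∈ Set.Icc 1 n := ⟨hb1, hbn⟩
      have hnd : ¬ x ∣ b := by
        intro hdvd
        obtain ⟨y, hyB, hxy⟩ := (Nat.Prime.prime hxprime).exists_mem_finset_dvd hdvd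
        have hyprime := (hyfacts y hyB).1
        have hxady : x = y := (Nat.prime_dvd_prime_iff_eq hxprime hyprime).mp hxy
        have hmem := Finset.mem_erase.mp (hBsub hyB)
        exact hmem.1 hxady.symm
      have hnotle : ¬ (f x ≤ f b) := by
        rw [hf x hxmem b hbmem]
        exact hnd
      rw [Pi.le_def] at hnotle
      push_neg at hnotle
      obtain ⟨c, hc⟩ := hnotle
      refine ⟨c, fun y hy => ?_⟩
      have hyd : y ∣ b := Finset.dvd_prod_of_mem _ hy
      have hymem : y ∈ Set.Icc 1 n :=
        ⟨(hyfacts y hy).1.one_lt.le, le_trans ((hyfacts y hy).2) hzlen⟩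
      have hfyb : f y ≤ f b := (hf y hymem b hbmem).mpr hyd
      calc f y c ≤ f b c := hfyb c
        _ < f x c := hc
    have := dushnik hj2 P hPcard (fun c y => f y c) hsuit
    omega
  -- final arithmetic
  constructor
  · have hjj : j ≤ j*j + 1 := by nlinarith
    have hcast : ((j*j + 1 - j : ℕ) : ℝ) = (j:ℝ)*(j:ℝ) + 1 - (j:ℝ) := by
      push_cast [Nat.cast_sub hjj]
      ring
    have hdimR : ((j:ℝ)*(j:ℝ) + 1 - (j:ℝ)) ≤ (divDim (Set.Icc 1 n) : ℝ) := by
      rw [← hcast]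
      exact_mod_cast hdim
    have hA2 : L^2 / LL^2 = A^2 := by
      rw [hAdef, div_pow]
    rw [mul_div_assoc, hA2]
    have hb1 : (β*A)*(β*A) ≤ (j:ℝ)*(j:ℝ) :=
      mul_le_mul hjlo hjlo hβApos.le (Nat.cast_nonneg j)
    have h3 : 8 * A ≤ (ε*A) * A := mul_le_mul_of_nonneg_right hεA hApos.le
    have heq : (β*A)*(β*A)
        = A*A*(1/16) - (ε*(A*A))*(1/4) + ((ε*ε)*(A*A))*(1/4) := by
      rw [hβdef]; ring
    have hnn : (0:ℝ) ≤ (ε*ε)*(A*A) := by positivity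
    have heq2 : (1/16 - ε)*A^2 = A*A*(1/16) - ε*(A*A) := by ring
    linarith
  · linarith

/-- Lower bound: `dim(D_{[n]}) ≥ (1/16 - ε) (log n)² / (log log n)²` for large `n`. -/
theorem divDim_Icc_lower_bound :
    ∀ ε : ℝ, 0 < ε → ∃ N : ℕ, ∀ n : ℕ, N ≤ n →
      (1 / 16 - ε) * (Real.log n) ^ 2 / (Real.log (Real.log n)) ^ 2
        ≤ (divDim (Set.Icc 1 n) : ℝ) := by
  intro ε hε
  have hε' : 0 < min ε (1/32) := lt_min hε (by norm_num)
  have hε32 : min ε (1/32) ≤ 1/32 := min_le_right _ _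
  obtain ⟨N, hN⟩ := core (min ε (1/32)) hε' hε32
  refine ⟨N, fun n hn => ?_⟩
  obtain ⟨h1, hLL1⟩ := hN n hn
  have hεε : min ε (1/32) ≤ ε := min_le_left _ _
  have hnum : (1/16 - ε) * (Real.log n)^2 ≤ (1/16 - min ε (1/32)) * (Real.log n)^2 :=
    mul_le_mul_of_nonneg_right (by linarith) (sq_nonneg _)
  have hden : (0:ℝ) < (Real.log (Real.log n))^2 := by positivity
  have h2 : (1/16 - ε) * (Real.log n)^2 / (Real.log (Real.log n))^2
      ≤ (1/16 - min ε (1/32)) * (Real.log n)^2 / (Real.log (Real.log n))^2 := by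
    apply div_le_div_of_nonneg_right hnum hden.le
  exact le_trans h2 h1
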